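/- For any vectors v_1,…,v_n in 𝔽^d (𝔽 = ℝ or ℂ), not all zero, and t ≥ 1, Σ_j Σ_k |⟨v_j,v_k⟩|^{2t} ≥ c_t(𝔽^d) · (Σ_ℓ ‖v_ℓ‖^{2t})², where c_t(ℝ^d) = (1·3·5⋯(2t−1))/(d(d+2)⋯(d+2t−2)) and c_t(ℂ^d) = 1/C(t+d−1, t). -/

import Mathlib

/-- `c_t(ℝ^d) = (1·3·5⋯(2t−1))/(d(d+2)⋯(d+2t−2))`. -/
noncomputable def ctReal (d t : ℕ) : ℝ :=
  (∏ i ∈ Finset.range t, (2 * i + 1 : ℝ)) /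
    (∏ i ∈ Finset.range t, ((d : ℝ) + 2 * i))

/-- `c_t(ℂ^d) = 1/C(t+d−1, t)`. -/
noncomputable def ctComplex (d t : ℕ) : ℝ :=
  1 / (Nat.choose (t + d - 1) t : ℝ)

open Finset

noncomputable def FF (c t : ℕ) : ℝ :=
  2 ^ t * (∏ i ∈ Finset.range t, ((c : ℝ) + 2 * i)) / (t.factorial : ℝ)

lemma FF_zero (c : ℕ) : FF c 0 = 1 := by simp [FF]

lemma FF_succ (c t : ℕ) : ((t : ℝ) + 1) * FF c (t + 1) = 2 * ((c : ℝ) + 2 * t) * FF c t := by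
  have h : (Nat.factorial (t+1) : ℝ) = ((t:ℝ)+1) * t.factorial := by
    push_cast [Nat.factorial_succ]; ring
  have h0 : (t.factorial : ℝ) ≠ 0 := by positivity
  have h1 : ((t:ℝ)+1) ≠ 0 := by positivity
  unfold FF
  rw [prod_range_succ, h]
  field_simp
  ring

lemma centralBinom_conv (c : ℕ) : ∀ t : ℕ,
    ∑ k ∈ range (t + 1), (Nat.centralBinom k : ℝ) * FF c (t - k) = FF (c + 1) t := by
  intro t
  induction t with
  | zero => simp [FF, Nat.centralBinom_zero]
  | succ t ih =>
    have key : ((t : ℝ) + 1) * ∑ k ∈ range (t + 2), (Nat.centralBinom k : ℝ) * FF c (t + 1 - k)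
        = 2 * ((c : ℝ) + 1 + 2 * t)
            * ∑ k ∈ range (t + 1), (Nat.centralBinom k : ℝ) * FF c (t - k) := by
      rw [mul_sum]
      have split : ∀ k ∈ range (t + 2),
          ((t : ℝ) + 1) * ((Nat.centralBinom k : ℝ) * FF c (t + 1 - k))
          = (Nat.centralBinom k : ℝ) * ((t + 1 - k : ℕ) : ℝ) * FF c (t + 1 - k)
            + (k : ℝ) * (Nat.centralBinom k : ℝ) * FF c (t + 1 - k) := by
        intro k hk
        have hk' : k ≤ t + 1 := by simpa [Nat.lt_succ_iff] using mem_range.1 hk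
        rw [Nat.cast_sub hk']
        push_cast
        ring
      rw [sum_congr rfl split, sum_add_distrib]
      have hS1 : ∑ k ∈ range (t + 2),
            (Nat.centralBinom k : ℝ) * ((t + 1 - k : ℕ) : ℝ) * FF c (t + 1 - k)
          = ∑ k ∈ range (t + 1),
            (Nat.centralBinom k : ℝ) * (2 * ((c : ℝ) + 2 * ((t - k : ℕ) : ℝ)) * FF c (t - k)) := by
        rw [sum_range_succ]
        simp only [Nat.sub_self, Nat.cast_zero, mul_zero, zero_mul, add_zero]
        refine sum_congr rfl fun k hk => ?_
        have hk' : k ≤ t := by simpa [Nat.lt_succ_iff] using mem_range.1 hk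
        have h1 : t + 1 - k = (t - k) + 1 := by omega
        rw [h1]
        have h2 := FF_succ c (t - k)
        push_cast at h2 ⊢
        linear_combination (Nat.centralBinom k : ℝ) * h2
      have hS2 : ∑ k ∈ range (t + 2),
            (k : ℝ) * (Nat.centralBinom k : ℝ) * FF c (t + 1 - k)
          = ∑ k ∈ range (t + 1),
            (Nat.centralBinom k : ℝ) * (2 * (2 * (k : ℝ) + 1) * FF c (t - k)) := by
        rw [sum_range_succ']
        simp only [Nat.cast_zero, zero_mul, add_zero]
        refine sum_congr rfl fun k hk => ?_
        have h := Nat.succ_mul_centralBinom_succ k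
        have h' : ((k : ℝ) + 1) * (Nat.centralBinom (k + 1) : ℝ)
            = 2 * (2 * (k : ℝ) + 1) * (Nat.centralBinom k : ℝ) := by
          exact_mod_cast congrArg (Nat.cast (R := ℝ)) h
        have h3 : t + 1 - (k + 1) = t - k := by omega
        rw [h3]
        push_cast
        linear_combination FF c (t - k) * h'
      rw [hS1, hS2, mul_sum]
      refine Eq.trans sum_add_distrib.symm (sum_congr rfl fun k hk => ?_)
      have hk' : k ≤ t := by simpa [Nat.lt_succ_iff] using mem_range.1 hk
      rw [Nat.cast_sub hk']
      ring
    have h1 : ((t : ℝ) + 1) ≠ 0 := by positivity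
    have h2 := FF_succ (c + 1) t
    push_cast at h2
    rw [ih] at key
    have : ((t : ℝ) + 1) * ∑ k ∈ range (t + 2), (Nat.centralBinom k : ℝ) * FF c (t + 1 - k)
        = ((t : ℝ) + 1) * FF (c + 1) (t + 1) := by rw [key, h2]
    exact mul_left_cancel₀ h1 this

lemma FF_zeroc {t : ℕ} (ht : 0 < t) : FF 0 t = 0 := by
  unfold FF
  rw [prod_eq_zero (mem_range.2 ht)]
  · simp
  · simp

lemma sum_prod_centralBinom {ι : Type*} [DecidableEq ι] (s : Finset ι) (t : ℕ) :
    ∑ m ∈ piAntidiag s t, ∏ a ∈ s, (Nat.centralBinom (m a) : ℝ) = FF s.card t := by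
  induction s using Finset.cons_induction generalizing t with
  | empty =>
    rcases Nat.eq_zero_or_pos t with rfl | ht
    · simp [FF]
    · rw [piAntidiag_empty_of_ne_zero (by omega), card_empty, FF_zeroc ht]
      simp
  | cons i s hi ih =>
    rw [piAntidiag_cons, sum_disjiUnion]
    have step : ∀ p ∈ antidiagonal t,
        (∑ m ∈ (piAntidiag s p.2).map
            (addRightEmbedding fun j => if j = i then p.1 else 0),
          ∏ a ∈ cons i s hi, (Nat.centralBinom (m a) : ℝ))
        = (Nat.centralBinom p.1 : ℝ) * FF s.card p.2 := by
      intro p hp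
      rw [sum_map, ← ih p.2, mul_sum]
      refine sum_congr rfl fun g hg => ?_
      have hgi : g i = 0 := by
        by_contra h
        exact hi ((mem_piAntidiag.1 hg).2 i h)
      simp only [addRightEmbedding_apply, prod_cons]
      rw [Pi.add_apply, hgi, zero_add, if_pos rfl]
      congr 1
      refine prod_congr rfl fun a ha => ?_
      have hai : a ≠ i := fun h => hi (h ▸ ha)
      rw [Pi.add_apply, if_neg hai, add_zero]
    rw [sum_congr rfl step, Finset.Nat.sum_antidiagonal_eq_sum_range_succ_mk,
      card_cons]
    exact centralBinom_conv s.card t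

lemma double_factorial_prod (t : ℕ) :
    (∏ i ∈ range t, (2 * (i : ℝ) + 1)) * (2 ^ t * (t.factorial : ℝ))
      = ((2 * t).factorial : ℝ) := by
  induction t with
  | zero => simp
  | succ t ih =>
    have h : 2 * (t + 1) = (2 * t + 1) + 1 := by ring
    rw [prod_range_succ, h]
    push_cast [Nat.factorial_succ]
    push_cast [Nat.factorial_succ] at ih ⊢
    linear_combination (2 * (t:ℝ) + 1) * 2 * ((t:ℝ)+1) * ih

lemma centralBinom_fact (n : ℕ) :
    ((2 * n).factorial : ℝ) = (Nat.centralBinom n : ℝ) * ((n.factorial : ℝ)) ^ 2 := by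
  have h := Nat.choose_mul_factorial_mul_factorial (Nat.le_mul_of_pos_left n (by norm_num) : n ≤ 2 * n)
  have h2 : 2 * n - n = n := by omega
  rw [h2] at h
  have := congrArg (Nat.cast (R := ℝ)) h
  push_cast at this
  rw [← this, Nat.centralBinom]
  ring

lemma key_identity (d t : ℕ) :
    ∑ m ∈ piAntidiag (univ : Finset (Fin d)) t,
      (Nat.multinomial univ m : ℝ) ^ 2 / (Nat.multinomial univ (fun a => 2 * m a) : ℝ)
    = (∏ i ∈ range t, ((d : ℝ) + 2 * i)) / (∏ i ∈ range t, (2 * (i : ℝ) + 1)) := by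
  have hterm : ∀ m ∈ piAntidiag (univ : Finset (Fin d)) t,
      (Nat.multinomial univ m : ℝ) ^ 2 / (Nat.multinomial univ (fun a => 2 * m a) : ℝ)
      = (t.factorial : ℝ) ^ 2 / ((2 * t).factorial : ℝ)
          * ∏ a : Fin d, (Nat.centralBinom (m a) : ℝ) := by
    intro m hm
    have hsum : ∑ a, m a = t := (mem_piAntidiag.1 hm).1
    have hA : (0 : ℝ) < ∏ a : Fin d, ((m a).factorial : ℝ) := by positivity
    have hC : (0 : ℝ) < ∏ a : Fin d, (Nat.centralBinom (m a) : ℝ) := by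
      refine prod_pos fun a _ => ?_
      exact_mod_cast Nat.centralBinom_pos (m a)
    have h1 : (∏ a : Fin d, ((m a).factorial : ℝ)) * (Nat.multinomial univ m : ℝ)
        = (t.factorial : ℝ) := by
      have := Nat.multinomial_spec (univ : Finset (Fin d)) m
      rw [hsum] at this
      exact_mod_cast this
    have h2 : (∏ a : Fin d, (((2 * m a)).factorial : ℝ))
        * (Nat.multinomial univ (fun a => 2 * m a) : ℝ) = ((2 * t).factorial : ℝ) := by
      have := Nat.multinomial_spec (univ : Finset (Fin d)) (fun a => 2 * m a)
      have hs2 : ∑ a, 2 * m a = 2 * t := by rw [← Finset.mul_sum, hsum]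
      rw [hs2] at this
      exact_mod_cast this
    have h3 : (∏ a : Fin d, (((2 * m a)).factorial : ℝ))
        = (∏ a : Fin d, (Nat.centralBinom (m a) : ℝ))
            * (∏ a : Fin d, ((m a).factorial : ℝ)) ^ 2 := by
      rw [← prod_pow, ← prod_mul_distrib]
      exact prod_congr rfl fun a _ => centralBinom_fact (m a)
    have e1 : (Nat.multinomial univ m : ℝ)
        = (t.factorial : ℝ) / ∏ a : Fin d, ((m a).factorial : ℝ) :=
      eq_div_of_mul_eq hA.ne' (by linarith [h1, mul_comm (∏ a : Fin d, ((m a).factorial : ℝ)) (Nat.multinomial univ m : ℝ)])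
    have e2 : (Nat.multinomial univ (fun a => 2 * m a) : ℝ)
        = ((2 * t).factorial : ℝ)
            / ((∏ a : Fin d, (Nat.centralBinom (m a) : ℝ))
                * (∏ a : Fin d, ((m a).factorial : ℝ)) ^ 2) := by
      rw [← h3]
      refine eq_div_of_mul_eq (by rw [h3]; positivity) ?_
      rw [mul_comm]
      exact h2
    rw [e1, e2]
    have hf1 : (t.factorial : ℝ) ≠ 0 := by positivity
    have hf2 : ((2 * t).factorial : ℝ) ≠ 0 := by positivity
    field_simp
  rw [sum_congr rfl hterm, ← mul_sum]
  have := sum_prod_centralBinom (univ : Finset (Fin d)) t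
  rw [card_univ, Fintype.card_fin] at this
  rw [this]
  unfold FF
  have hd := double_factorial_prod t
  have hf1 : (t.factorial : ℝ) ≠ 0 := by positivity
  have hf2 : ((2 * t).factorial : ℝ) ≠ 0 := by positivity
  have ho : (∏ i ∈ range t, (2 * (i : ℝ) + 1)) ≠ 0 := by positivity
  field_simp
  linear_combination (∏ i ∈ range t, ((d : ℝ) + 2 * i)) * hd

lemma card_piAntidiag_univ (d t : ℕ) :
    (piAntidiag (univ : Finset (Fin d)) t).card = (t + d - 1).choose t := by
  rw [← map_sym_eq_piAntidiag, card_map, sym_univ, ← Fintype.card_coe]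
  simp only [Fintype.card_coe]
  rw [Finset.card_univ, Sym.card_sym_eq_choose, Fintype.card_fin]
  congr 1
  omega

lemma real_case (d t n : ℕ) (hd : 1 ≤ d) (v : Fin n → EuclideanSpace ℝ (Fin d)) :
    ctReal d t * (∑ l, ‖v l‖ ^ (2 * t)) ^ 2 ≤
      ∑ j, ∑ k, |(inner ℝ (v j) (v k) : ℝ)| ^ (2 * t) := by
  classical
  set A : Fin n → (Fin d → ℕ) → ℝ := fun j m => ∏ a, v j a ^ m a with hA
  set X : (Fin d → ℕ) → ℝ := fun m => ∑ j, A j m with hX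
  set M : (Fin d → ℕ) → ℝ := fun m => (Nat.multinomial univ m : ℝ) with hM
  have hMpos : ∀ m : Fin d → ℕ, 0 < M m := by
    intro m
    simp only [hM]
    exact_mod_cast Nat.multinomial_pos (univ : Finset (Fin d)) m
  have hinner : ∀ j k : Fin n, (inner ℝ (v j) (v k) : ℝ) = ∑ a, v j a * v k a := by
    intro j k
    simp [PiLp.inner_apply, RCLike.inner_apply, conj_trivial]
    exact sum_congr rfl fun _ _ => mul_comm _ _
  -- expansion of the RHS
  have hRHS : ∑ j, ∑ k, |(inner ℝ (v j) (v k) : ℝ)| ^ (2 * t)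
      = ∑ s ∈ piAntidiag (univ : Finset (Fin d)) (2 * t), M s * X s ^ 2 := by
    have h1 : ∀ j k : Fin n, |(inner ℝ (v j) (v k) : ℝ)| ^ (2 * t)
        = ∑ s ∈ piAntidiag (univ : Finset (Fin d)) (2 * t), M s * (A j s * A k s) := by
      intro j k
      rw [pow_mul, sq_abs, ← pow_mul, hinner j k, sum_pow_eq_sum_piAntidiag]
      refine sum_congr rfl fun s _ => ?_
      congr 1
      rw [hA, ← prod_mul_distrib]
      exact prod_congr rfl fun a _ => mul_pow _ _ _
    simp_rw [h1]
    have swap1 : ∀ j : Fin n, ∑ k : Fin n, ∑ s ∈ piAntidiag (univ : Finset (Fin d)) (2*t),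
        M s * (A j s * A k s)
        = ∑ s ∈ piAntidiag (univ : Finset (Fin d)) (2*t), ∑ k : Fin n, M s * (A j s * A k s) :=
      fun j => sum_comm
    simp_rw [swap1]
    rw [sum_comm]
    refine sum_congr rfl fun s _ => ?_
    rw [sq, hX, sum_mul_sum, mul_sum]
    exact sum_congr rfl fun j _ => (mul_sum _ _ _).symm
  -- expansion of the norm sum
  have hN : ∑ l, ‖v l‖ ^ (2 * t)
      = ∑ m ∈ piAntidiag (univ : Finset (Fin d)) t, M m * X (fun a => 2 * m a) := by
    have h1 : ∀ l : Fin n, ‖v l‖ ^ (2 * t)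
        = ∑ m ∈ piAntidiag (univ : Finset (Fin d)) t, M m * A l (fun a => 2 * m a) := by
      intro l
      have hv : ‖v l‖ ^ 2 = ∑ a, (v l a) ^ 2 := by
        rw [← real_inner_self_eq_norm_sq]
        simp only [PiLp.inner_apply, RCLike.inner_apply', conj_trivial, sq]
      rw [pow_mul, hv, sum_pow_eq_sum_piAntidiag]
      refine sum_congr rfl fun m _ => ?_
      congr 1
      rw [hA]
      exact prod_congr rfl fun a _ => (pow_mul _ 2 (m a)).symm
    simp_rw [h1]
    rw [sum_comm]
    refine sum_congr rfl fun m _ => ?_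
    rw [hX, mul_sum]
  -- Cauchy-Schwarz
  set W : (Fin d → ℕ) → ℝ := fun m => M (fun a => 2 * m a) with hW
  have hWpos : ∀ m, 0 < W m := fun m => hMpos _
  have hCS : (∑ m ∈ piAntidiag (univ : Finset (Fin d)) t, M m * X (fun a => 2 * m a)) ^ 2
      ≤ (∑ m ∈ piAntidiag (univ : Finset (Fin d)) t, (M m) ^ 2 / W m)
        * ∑ m ∈ piAntidiag (univ : Finset (Fin d)) t, W m * X (fun a => 2 * m a) ^ 2 := by
    have := sum_mul_sq_le_sq_mul_sq (piAntidiag (univ : Finset (Fin d)) t)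
      (fun m => M m / Real.sqrt (W m)) (fun m => Real.sqrt (W m) * X (fun a => 2 * m a))
    have e1 : ∀ m, M m / Real.sqrt (W m) * (Real.sqrt (W m) * X (fun a => 2 * m a))
        = M m * X (fun a => 2 * m a) := by
      intro m
      have h0 : Real.sqrt (W m) ≠ 0 := by
        have := hWpos m
        positivity
      field_simp
    have e2 : ∀ m, (M m / Real.sqrt (W m)) ^ 2 = (M m) ^ 2 / W m := by
      intro m
      rw [div_pow, Real.sq_sqrt (hWpos m).le]
    have e3 : ∀ m, (Real.sqrt (W m) * X (fun a => 2 * m a)) ^ 2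
        = W m * X (fun a => 2 * m a) ^ 2 := by
      intro m
      rw [mul_pow, Real.sq_sqrt (hWpos m).le]
    simp_rw [e1, e2, e3] at this
    exact this
  -- the doubled sums embed into the big sum
  have hsub : ∑ m ∈ piAntidiag (univ : Finset (Fin d)) t, W m * X (fun a => 2 * m a) ^ 2
      ≤ ∑ s ∈ piAntidiag (univ : Finset (Fin d)) (2 * t), M s * X s ^ 2 := by
    have hinj : Set.InjOn (fun (m : Fin d → ℕ) (a : Fin d) => 2 * m a)
        (piAntidiag (univ : Finset (Fin d)) t) := by
      intro m1 _ m2 _ h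
      funext a
      have := congrFun h a
      simpa using this
    rw [← sum_image (f := fun s => M s * X s ^ 2) (by exact fun x hx y hy h => hinj hx hy h)]
    refine sum_le_sum_of_subset_of_nonneg ?_ ?_
    · intro s hs
      simp only [mem_image] at hs
      obtain ⟨m, hm, rfl⟩ := hs
      rw [mem_piAntidiag] at hm ⊢
      constructor
      · rw [← Finset.mul_sum, hm.1]
      · intro i hi
        exact mem_univ i
    · intro s _ _
      exact mul_nonneg (hMpos s).le (sq_nonneg _)
  -- put it together
  rw [hRHS, hN]
  have hK := key_identity d t
  have hprod1 : (0:ℝ) < ∏ i ∈ range t, (2 * (i : ℝ) + 1) := by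
    refine prod_pos fun i _ => by positivity
  have hprod2 : (0:ℝ) < ∏ i ∈ range t, ((d : ℝ) + 2 * i) := by
    refine prod_pos fun i _ => ?_
    have : (1:ℝ) ≤ (d:ℝ) := by exact_mod_cast hd
    positivity
  have hct : ctReal d t * ((∏ i ∈ range t, ((d : ℝ) + 2 * i)) / (∏ i ∈ range t, (2 * (i : ℝ) + 1))) = 1 := by
    unfold ctReal
    field_simp
  have hctpos : 0 < ctReal d t := div_pos hprod1 hprod2
  calc ctReal d t * (∑ m ∈ piAntidiag (univ : Finset (Fin d)) t, M m * X (fun a => 2 * m a)) ^ 2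
      ≤ ctReal d t * ((∑ m ∈ piAntidiag (univ : Finset (Fin d)) t, (M m) ^ 2 / W m)
        * ∑ m ∈ piAntidiag (univ : Finset (Fin d)) t, W m * X (fun a => 2 * m a) ^ 2) := by
        exact mul_le_mul_of_nonneg_left hCS hctpos.le
    _ = (ctReal d t * ((∏ i ∈ range t, ((d : ℝ) + 2 * i)) / (∏ i ∈ range t, (2 * (i : ℝ) + 1))))
        * ∑ m ∈ piAntidiag (univ : Finset (Fin d)) t, W m * X (fun a => 2 * m a) ^ 2 := by
        simp only [hW, hM]
        rw [hK]
        ring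
    _ = ∑ m ∈ piAntidiag (univ : Finset (Fin d)) t, W m * X (fun a => 2 * m a) ^ 2 := by
        rw [hct, one_mul]
    _ ≤ _ := hsub

lemma complex_case (d t n : ℕ) (hd : 1 ≤ d) (v : Fin n → EuclideanSpace ℂ (Fin d)) :
    ctComplex d t * (∑ l, ‖v l‖ ^ (2 * t)) ^ 2 ≤
      ∑ j, ∑ k, ‖(inner ℂ (v j) (v k) : ℂ)‖ ^ (2 * t) := by
  classical
  set P := piAntidiag (univ : Finset (Fin d)) t with hP
  set A : Fin n → (Fin d → ℕ) → ℂ := fun j m => ∏ a, v j a ^ m a with hA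
  set B : Fin n → (Fin d → ℕ) → (Fin d → ℕ) → ℂ :=
    fun j m m' => (starRingEnd ℂ) (A j m) * A j m' with hB
  set T : (Fin d → ℕ) → (Fin d → ℕ) → ℂ := fun m m' => ∑ j, B j m m' with hT
  set D : (Fin d → ℕ) → ℝ := fun m => ∑ j, ‖A j m‖ ^ 2 with hD
  set M : (Fin d → ℕ) → ℝ := fun m => (Nat.multinomial univ m : ℝ) with hM
  have hMpos : ∀ m : Fin d → ℕ, 0 < M m := by
    intro m
    simp only [hM]
    exact_mod_cast Nat.multinomial_pos (univ : Finset (Fin d)) m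
  have hinner : ∀ j k : Fin n,
      (inner ℂ (v j) (v k) : ℂ) = ∑ a, (starRingEnd ℂ) (v j a) * v k a := by
    intro j k
    simp [PiLp.inner_apply, RCLike.inner_apply]
    exact sum_congr rfl fun _ _ => mul_comm _ _
  -- z ↦ z^t expansion
  have hC2 : ∀ j k : Fin n, (inner ℂ (v j) (v k) : ℂ) ^ t
      = ∑ m ∈ P, ((M m : ℝ) : ℂ) * ((starRingEnd ℂ) (A j m) * A k m) := by
    intro j k
    rw [hinner j k, sum_pow_eq_sum_piAntidiag]
    refine sum_congr rfl fun m _ => ?_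
    have e : ∏ a, ((starRingEnd ℂ) (v j a) * v k a) ^ m a
        = (starRingEnd ℂ) (A j m) * A k m := by
      rw [hA]
      simp only [map_prod, map_pow]
      rw [← prod_mul_distrib]
      exact prod_congr rfl fun a _ => mul_pow _ _ _
    rw [e]
    simp [hM]
  -- the cast identity ‖z‖^{2t} = z^t * conj (z^t)
  have hcast : ∀ z : ℂ, ((‖z‖ ^ (2 * t) : ℝ) : ℂ) = z ^ t * (starRingEnd ℂ) (z ^ t) := by
    intro z
    have h1 : z ^ t * (starRingEnd ℂ) (z ^ t) = ((‖z ^ t‖ ^ 2 : ℝ) : ℂ) := by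
      rw [Complex.mul_conj, Complex.normSq_eq_norm_sq]
    rw [h1, norm_pow, ← pow_mul, mul_comm t 2]
  -- main expansion, in ℂ
  have hmainC : ((∑ j, ∑ k, ‖(inner ℂ (v j) (v k) : ℂ)‖ ^ (2 * t) : ℝ) : ℂ)
      = ((∑ m ∈ P, ∑ m' ∈ P, M m * M m' * ‖T m m'‖ ^ 2 : ℝ) : ℂ) := by
    push_cast
    have lhs1 : ∀ j k : Fin n, ((‖(inner ℂ (v j) (v k) : ℂ)‖ : ℝ) : ℂ) ^ (2 * t)
        = ∑ m ∈ P, ∑ m' ∈ P, (((M m : ℝ) : ℂ) * ((M m' : ℝ) : ℂ))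
            * (B j m m' * (starRingEnd ℂ) (B k m m')) := by
      intro j k
      have h0 : ((‖(inner ℂ (v j) (v k) : ℂ)‖ : ℝ) : ℂ) ^ (2 * t)
          = (((‖(inner ℂ (v j) (v k) : ℂ)‖ ^ (2 * t) : ℝ)) : ℂ) := by push_cast; rfl
      rw [h0, hcast, hC2 j k, map_sum, sum_mul_sum]
      refine sum_congr rfl fun m _ => sum_congr rfl fun m' _ => ?_
      have hconj : (starRingEnd ℂ) (((M m' : ℝ) : ℂ) * ((starRingEnd ℂ) (A j m') * A k m'))
          = ((M m' : ℝ) : ℂ) * (A j m' * (starRingEnd ℂ) (A k m')) := by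
        simp only [map_mul, Complex.conj_conj, Complex.conj_ofReal]
      rw [hconj, hB]
      simp only [map_mul, Complex.conj_conj]
      ring
    simp_rw [lhs1]
    -- swap the order of summation
    have swap1 : ∀ j : Fin n, ∑ k : Fin n, ∑ m ∈ P, ∑ m' ∈ P,
        (((M m : ℝ) : ℂ) * ((M m' : ℝ) : ℂ)) * (B j m m' * (starRingEnd ℂ) (B k m m'))
        = ∑ m ∈ P, ∑ k : Fin n, ∑ m' ∈ P,
        (((M m : ℝ) : ℂ) * ((M m' : ℝ) : ℂ)) * (B j m m' * (starRingEnd ℂ) (B k m m')) :=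
      fun j => sum_comm
    have swap2 : ∀ (j : Fin n) (m : Fin d → ℕ), ∑ k : Fin n, ∑ m' ∈ P,
        (((M m : ℝ) : ℂ) * ((M m' : ℝ) : ℂ)) * (B j m m' * (starRingEnd ℂ) (B k m m'))
        = ∑ m' ∈ P, ∑ k : Fin n,
        (((M m : ℝ) : ℂ) * ((M m' : ℝ) : ℂ)) * (B j m m' * (starRingEnd ℂ) (B k m m')) :=
      fun j m => sum_comm
    simp_rw [swap1, swap2]
    rw [sum_comm]
    have swap3 : ∀ m : Fin d → ℕ, ∑ j : Fin n, ∑ m' ∈ P, ∑ k : Fin n,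
        (((M m : ℝ) : ℂ) * ((M m' : ℝ) : ℂ)) * (B j m m' * (starRingEnd ℂ) (B k m m'))
        = ∑ m' ∈ P, ∑ j : Fin n, ∑ k : Fin n,
        (((M m : ℝ) : ℂ) * ((M m' : ℝ) : ℂ)) * (B j m m' * (starRingEnd ℂ) (B k m m')) :=
      fun m => sum_comm
    simp_rw [swap3]
    refine sum_congr rfl fun m _ => sum_congr rfl fun m' _ => ?_
    -- ∑ j ∑ k c * (B j * conj (B k)) = M m * M m' * ‖T m m'‖²
    have hTnorm : ((‖T m m'‖ : ℝ) : ℂ) ^ 2 = T m m' * (starRingEnd ℂ) (T m m') := by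
      rw [Complex.mul_conj, Complex.normSq_eq_norm_sq]
      norm_cast
    rw [hTnorm]
    simp only [hT]
    simp only [map_sum]
    rw [sum_mul_sum, mul_sum]
    refine sum_congr rfl fun j _ => ?_
    rw [mul_sum]
  have hmain : ∑ j, ∑ k, ‖(inner ℂ (v j) (v k) : ℂ)‖ ^ (2 * t)
      = ∑ m ∈ P, ∑ m' ∈ P, M m * M m' * ‖T m m'‖ ^ 2 :=
    Complex.ofReal_injective hmainC
  -- norm sum expansion
  have hN : ∑ l, ‖v l‖ ^ (2 * t) = ∑ m ∈ P, M m * D m := by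
    have h1 : ∀ l : Fin n, ‖v l‖ ^ (2 * t) = ∑ m ∈ P, M m * ‖A l m‖ ^ 2 := by
      intro l
      have hv : ‖v l‖ ^ 2 = ∑ a, ‖v l a‖ ^ 2 := by
        rw [EuclideanSpace.norm_eq]
        rw [Real.sq_sqrt]
        positivity
      rw [pow_mul, hv, sum_pow_eq_sum_piAntidiag]
      refine sum_congr rfl fun m _ => ?_
      congr 1
      rw [hA, norm_prod, ← prod_pow]
      refine prod_congr rfl fun a _ => ?_
      rw [norm_pow, ← pow_mul, ← pow_mul, Nat.mul_comm 2 (m a)]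
    simp_rw [h1]
    rw [sum_comm]
    refine sum_congr rfl fun m _ => ?_
    rw [hD, mul_sum]
  -- diagonal value
  have hdiag : ∀ m : Fin d → ℕ, ‖T m m‖ ^ 2 = D m ^ 2 := by
    intro m
    have h1 : T m m = ((D m : ℝ) : ℂ) := by
      simp only [hT, hD]
      push_cast
      refine sum_congr rfl fun j _ => ?_
      simp only [hB]
      rw [mul_comm, Complex.mul_conj, Complex.normSq_eq_norm_sq]
      norm_cast
    rw [h1, Complex.norm_real, Real.norm_eq_abs, _root_.sq_abs]
  -- Cauchy-Schwarz on the diagonal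
  have hDnonneg : ∀ m : Fin d → ℕ, 0 ≤ D m := by
    intro m
    rw [hD]
    positivity
  have hCS : (∑ m ∈ P, M m * D m) ^ 2 ≤ (P.card : ℝ) * ∑ m ∈ P, (M m * D m) ^ 2 :=
    sq_sum_le_card_mul_sum_sq
  have hdiagsum : ∑ m ∈ P, (M m * D m) ^ 2 ≤ ∑ m ∈ P, ∑ m' ∈ P, M m * M m' * ‖T m m'‖ ^ 2 := by
    refine sum_le_sum fun m hm => ?_
    have h1 : (M m * D m) ^ 2 = M m * M m * ‖T m m‖ ^ 2 := by
      rw [hdiag m]; ring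
    rw [h1]
    refine single_le_sum (f := fun m' => M m * M m' * ‖T m m'‖ ^ 2) ?_ hm
    intro m' _
    have := hMpos m
    have := hMpos m'
    positivity
  -- putting it together
  have hcard : ctComplex d t * ((P.card : ℝ)) = 1 := by
    rw [hP, card_piAntidiag_univ]
    unfold ctComplex
    have hpos : 0 < (t + d - 1).choose t := Nat.choose_pos (by omega)
    have : ((t + d - 1).choose t : ℝ) ≠ 0 := by exact_mod_cast hpos.ne'
    field_simp
  have hctpos : 0 < ctComplex d t := by
    unfold ctComplex
    have hpos : 0 < (t + d - 1).choose t := Nat.choose_pos (by omega)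
    have : (0:ℝ) < ((t + d - 1).choose t : ℝ) := by exact_mod_cast hpos
    positivity
  rw [hmain, hN]
  calc ctComplex d t * (∑ m ∈ P, M m * D m) ^ 2
      ≤ ctComplex d t * ((P.card : ℝ) * ∑ m ∈ P, (M m * D m) ^ 2) :=
        mul_le_mul_of_nonneg_left hCS hctpos.le
    _ = (ctComplex d t * (P.card : ℝ)) * ∑ m ∈ P, (M m * D m) ^ 2 := by ring
    _ = ∑ m ∈ P, (M m * D m) ^ 2 := by rw [hcard, one_mul]
    _ ≤ _ := hdiagsum

/-- The Sidel'nikov–Welch inequality: for vectors `v_1,…,v_n` in `𝔽^d` (`𝔽 = ℝ, ℂ`),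
not all zero, `Σ Σ |⟨v_j,v_k⟩|^{2t} ≥ c_t(𝔽^d) (Σ ‖v_ℓ‖^{2t})²`. -/
theorem sidelnikov_welch_inequality (d t : ℕ) (hd : 1 ≤ d) (ht : 1 ≤ t) :
    (∀ (n : ℕ) (v : Fin n → EuclideanSpace ℝ (Fin d)), (∃ j, v j ≠ 0) →
      ctReal d t * (∑ l, ‖v l‖ ^ (2 * t)) ^ 2 ≤
        ∑ j, ∑ k, |(inner ℝ (v j) (v k) : ℝ)| ^ (2 * t)) ∧
    (∀ (n : ℕ) (v : Fin n → EuclideanSpace ℂ (Fin d)), (∃ j, v j ≠ 0) →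
      ctComplex d t * (∑ l, ‖v l‖ ^ (2 * t)) ^ 2 ≤
        ∑ j, ∑ k, ‖(inner ℂ (v j) (v k) : ℂ)‖ ^ (2 * t)) := by
  constructor
  · intro n v _
    exact real_case d t n hd v
  · intro n v _
    exact complex_case d t n hd v
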